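/- Define T : (0, 1/12] -> R by T(t) = (1 - sqrt(1 - 12t)) / (6t), and define U : (0, 1/12] -> R by U(t) = ( (1 - t*T(t)^2) - sqrt( (1 - t*T(t)^2)^2 - 4*t^2*T(t)^4 ) ) / ( 2*t*T(t)^2 ). Then the limit, as t tends to 1/12 from the left, of (1 - U(t)) / (1 - 12t)^{1/4} equals sqrt(6). -/

import Mathlib

/-- The branch `T(t) = (1 - √(1 - 12t)) / (6t)` of the equation `T = 1 + 3tT²`. -/
noncomputable def Tfun (t : ℝ) : ℝ := (1 - Real.sqrt (1 - 12 * t)) / (6 * t)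

/-- The branch `U(t)` of the equation `U = tT²(1 + U + U²)` vanishing at `0⁺`. -/
noncomputable def Ufun (t : ℝ) : ℝ :=
  ((1 - t * Tfun t ^ 2) -
      Real.sqrt ((1 - t * Tfun t ^ 2) ^ 2 - 4 * t ^ 2 * Tfun t ^ 4)) /
    (2 * t * Tfun t ^ 2)

/-- Auxiliary function in the variable `s = √(1 - 12t)`. -/
noncomputable def Ffun (s : ℝ) : ℝ :=
  3 * (Real.sqrt ((8 + 4 * s) / 3) - 2 * Real.sqrt s) / (2 * (1 - s))

lemma key (t : ℝ) (ht0 : 0 < t) (ht1 : t < 1 / 12) :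
    (1 - Ufun t) / (1 - 12 * t) ^ ((1 : ℝ) / 4) = Ffun (Real.sqrt (1 - 12 * t)) := by
  set s : ℝ := Real.sqrt (1 - 12 * t) with hs_def
  have h12 : (0 : ℝ) < 1 - 12 * t := by linarith
  have hs0 : 0 < s := Real.sqrt_pos.mpr h12
  have hss : s ^ 2 = 1 - 12 * t := Real.sq_sqrt h12.le
  have hs1 : s < 1 := by nlinarith [hss]
  have hsp : (0 : ℝ) < 1 + s := by linarith
  have hsm : (0 : ℝ) < 1 - s := by linarith
  have ht : (6 : ℝ) * t ≠ 0 := by positivity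
  have hT : Tfun t = (1 - s) / (6 * t) := rfl
  have ha : t * Tfun t ^ 2 = (1 - s) / (3 * (1 + s)) := by
    rw [hT]
    have h12t : 12 * t = 1 - s ^ 2 := by linarith
    field_simp
    linear_combination (-3) * h12t
  have hinner : (1 - t * Tfun t ^ 2) ^ 2 - 4 * t ^ 2 * Tfun t ^ 4 =
      s * ((8 + 4 * s) / 3) / (1 + s) ^ 2 := by
    have h4 : 4 * t ^ 2 * Tfun t ^ 4 = 4 * (t * Tfun t ^ 2) ^ 2 := by ring
    rw [h4, ha]
    field_simp
    ring
  have hr : Real.sqrt ((1 - t * Tfun t ^ 2) ^ 2 - 4 * t ^ 2 * Tfun t ^ 4) =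
      Real.sqrt s * Real.sqrt ((8 + 4 * s) / 3) / (1 + s) := by
    rw [hinner, Real.sqrt_div (by positivity), Real.sqrt_sq hsp.le,
      Real.sqrt_mul hs0.le]
  have hrpow : (1 - 12 * t) ^ ((1 : ℝ) / 4) = Real.sqrt s := by
    rw [← hss, Real.sqrt_eq_rpow, ← Real.rpow_natCast s 2,
      ← Real.rpow_mul hs0.le]
    norm_num
  have hb : 2 * t * Tfun t ^ 2 = 2 * ((1 - s) / (3 * (1 + s))) := by
    rw [mul_assoc, ha]
  rw [Ufun, hr, ha, hrpow, Ffun, hb]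
  have hrs : Real.sqrt s > 0 := Real.sqrt_pos.mpr hs0
  have hrs2 : Real.sqrt s ^ 2 = s := Real.sq_sqrt hs0.le
  set r := Real.sqrt s with hr_def
  set c := Real.sqrt ((8 + 4 * s) / 3) with hc_def
  have hs' : s = r ^ 2 := hrs2.symm
  have hr1 : (0:ℝ) < 1 - r ^ 2 := hs' ▸ hsm
  have hr2 : (0:ℝ) < 1 + r ^ 2 := hs' ▸ hsp
  rw [hs']
  field_simp
  ring

lemma F0 : Ffun 0 = Real.sqrt 6 := by
  rw [Ffun]
  have h : ((8 : ℝ) + 4 * 0) / 3 = (2 / 3) ^ 2 * 6 := by norm_num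
  rw [h, Real.sqrt_mul (by positivity), Real.sqrt_sq (by norm_num), Real.sqrt_zero]
  ring

/-- As `t → (1/12)⁻`, the quotient
`(1 - U(t)) / (1 - 12t)^(1/4)` tends to `√6`. -/
theorem stmt_15 :
    Filter.Tendsto (fun t : ℝ => (1 - Ufun t) / (1 - 12 * t) ^ ((1 : ℝ) / 4))
      (nhdsWithin (1 / 12 : ℝ) (Set.Iio (1 / 12)))
      (nhds (Real.sqrt 6)) := by
  have hFc : ContinuousAt Ffun 0 := by
    apply ContinuousAt.div
    · fun_prop
    · fun_prop
    · norm_num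
  have hg : Filter.Tendsto (fun t : ℝ => Real.sqrt (1 - 12 * t))
      (nhdsWithin (1 / 12 : ℝ) (Set.Iio (1 / 12))) (nhds 0) := by
    have : Continuous fun t : ℝ => Real.sqrt (1 - 12 * t) := by fun_prop
    have h0 : Real.sqrt (1 - 12 * (1 / 12 : ℝ)) = 0 := by norm_num
    exact h0 ▸ (this.continuousAt.tendsto.mono_left nhdsWithin_le_nhds)
  have hcomp : Filter.Tendsto (fun t : ℝ => Ffun (Real.sqrt (1 - 12 * t)))
      (nhdsWithin (1 / 12 : ℝ) (Set.Iio (1 / 12))) (nhds (Real.sqrt 6)) := by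
    rw [← F0]
    exact hFc.tendsto.comp hg
  refine hcomp.congr' ?_
  have h1 : ∀ᶠ t in nhdsWithin (1 / 12 : ℝ) (Set.Iio (1 / 12)), t < 1 / 12 :=
    eventually_mem_nhdsWithin.mono fun t ht => ht
  have h2 : ∀ᶠ t in nhdsWithin (1 / 12 : ℝ) (Set.Iio (1 / 12)), 0 < t :=
    eventually_nhdsWithin_of_eventually_nhds
      (eventually_gt_nhds (by norm_num : (0 : ℝ) < 1 / 12))
  filter_upwards [h1, h2] with t ht1 ht0
  exact (key t ht0 ht1).symm
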